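/- In an arbitrary GPT (V, C, u) with informationally complete sets of measurements, the balanced data hiding ratio R̃(M) (defined using pairs of states with equal a priori probabilities 1/2) and the standard data hiding ratio R(M) (over all a priori probabilities) satisfy R̃(M) ≤ R(M) ≤ 2·R̃(M) + 1. -/

import Mathlib

/-- A seminorm on a finite-dimensional real normed space is bounded by a
multiple of the norm. -/
lemma seminorm_bound_of_fd {V : Type*} [NormedAddCommGroup V] [NormedSpace ℝ V]
    [FiniteDimensional ℝ V] (B : Seminorm ℝ V) :
    ∃ C : ℝ, 0 ≤ C ∧ ∀ x : V, B x ≤ C * ‖x‖ := by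
  classical
  set b := Module.Basis.ofVectorSpace ℝ V
  have hsum : ∀ (f : (Module.Basis.ofVectorSpaceIndex ℝ V) → V),
      B (∑ i, f i) ≤ ∑ i, B (f i) := by
    intro f
    refine Finset.le_sum_of_subadditive (fun v => B v) (by simp) ?_ _ _
    intro x y; exact map_add_le_add B x y
  set c : (Module.Basis.ofVectorSpaceIndex ℝ V) → (V →L[ℝ] ℝ) :=
    fun i => LinearMap.toContinuousLinearMap (b.coord i)
  refine ⟨∑ i, ‖c i‖ * B (b i), Finset.sum_nonneg fun i _ =>
      mul_nonneg (norm_nonneg _) (apply_nonneg B _), fun x => ?_⟩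
  have hx : x = ∑ i, b.repr x i • b i := (b.sum_repr x).symm
  calc B x = B (∑ i, b.repr x i • b i) := by rw [← hx]
    _ ≤ ∑ i, B (b.repr x i • b i) := hsum _
    _ = ∑ i, |b.repr x i| * B (b i) := by
        refine Finset.sum_congr rfl fun i _ => ?_
        rw [map_smul_eq_mul]; simp [Real.norm_eq_abs]
    _ ≤ ∑ i, (‖c i‖ * ‖x‖) * B (b i) := by
        refine Finset.sum_le_sum fun i _ => ?_
        refine mul_le_mul_of_nonneg_right ?_ (apply_nonneg B _)
        have := (c i).le_opNorm x
        simpa [c, Real.norm_eq_abs, Module.Basis.coord_apply] using this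
    _ = (∑ i, ‖c i‖ * B (b i)) * ‖x‖ := by
        rw [Finset.sum_mul]; exact Finset.sum_congr rfl fun i _ => by ring

/-- A nondegenerate seminorm on a finite-dimensional real normed space is
bounded below by a multiple of the norm. -/
lemma seminorm_lower_bound_of_fd {V : Type*} [NormedAddCommGroup V] [NormedSpace ℝ V]
    [FiniteDimensional ℝ V] (N : Seminorm ℝ V) (hNdef : ∀ x : V, N x = 0 → x = 0) :
    ∃ c : ℝ, 0 < c ∧ ∀ x : V, c * ‖x‖ ≤ N x := by
  classical
  obtain ⟨D, hD0, hD⟩ := seminorm_bound_of_fd N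
  have hNcont : Continuous fun x : V => N x := by
    refine (LipschitzWith.of_dist_le_mul (K := ⟨D, hD0⟩) fun x y => ?_).continuous
    calc dist (N x) (N y) = ‖N x - N y‖ := rfl
      _ ≤ N (x - y) := N.norm_sub_map_le_sub x y
      _ ≤ D * ‖x - y‖ := hD _
      _ = D * dist x y := by rw [dist_eq_norm]
  rcases subsingleton_or_nontrivial V with hV | hV
  · refine ⟨1, one_pos, fun x => ?_⟩
    have : x = 0 := Subsingleton.elim x 0
    simp [this]
  · have hcpt : IsCompact (Metric.sphere (0 : V) 1) :=
      isCompact_sphere 0 1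
    have hne : (Metric.sphere (0 : V) 1).Nonempty :=
      NormedSpace.sphere_nonempty.mpr zero_le_one
    obtain ⟨w, hw, hwmin'⟩ := hcpt.exists_isMinOn hne hNcont.continuousOn
    have hwmin : ∀ z ∈ Metric.sphere (0 : V) 1, N w ≤ N z := fun z hz => hwmin' hz
    have hw1 : ‖w‖ = 1 := by simpa using hw
    have hwne : w ≠ 0 := by
      intro h; rw [h] at hw1; simp at hw1
    have hNw : 0 < N w := by
      rcases (apply_nonneg N w).lt_or_eq with h | h
      · exact h
      · exact absurd (hNdef w h.symm) hwne
    refine ⟨N w, hNw, fun x => ?_⟩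
    rcases eq_or_ne x 0 with rfl | hx
    · simp
    · have hxn : (0 : ℝ) < ‖x‖ := norm_pos_iff.mpr hx
      have hmem : (‖x‖⁻¹ • x) ∈ Metric.sphere (0 : V) 1 := by
        simp [norm_smul, abs_of_pos (inv_pos.mpr hxn), inv_mul_cancel₀ hxn.ne']
      have := hwmin _ hmem
      rw [map_smul_eq_mul] at this
      have h2 : N w * ‖x‖ ≤ (|‖x‖⁻¹| * N x) * ‖x‖ :=
        mul_le_mul_of_nonneg_right this (norm_nonneg x)
      rw [abs_of_pos (inv_pos.mpr hxn)] at h2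
      calc N w * ‖x‖ ≤ (‖x‖⁻¹ * N x) * ‖x‖ := h2
        _ = N x := by field_simp

/-- Balanced versus standard data hiding ratios. Abstractly: if `N ≤ B` are a
norm and a seminorm on a finite-dimensional real space, `u` is a functional with
`|u(x)| ≤ N(x)`, and there is a state `ω` with `B(ω) = N(ω) = u(ω) = 1`, then
the balanced ratio `R̃ = sup {B y / N y : y ≠ 0, u y = 0}` and the standard
ratio `R = sup {B x / N x : x ≠ 0}` satisfy `R̃ ≤ R ≤ 2 R̃ + 1`. -/
theorem balanced_vs_standard_data_hiding_ratio
    {V : Type*} [NormedAddCommGroup V] [NormedSpace ℝ V] [FiniteDimensional ℝ V]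
    (N B : Seminorm ℝ V)
    (hNdef : ∀ x : V, N x = 0 → x = 0)
    (hNB : ∀ x : V, N x ≤ B x)
    (u : V →ₗ[ℝ] ℝ)
    (hu : ∀ x : V, |u x| ≤ N x)
    (hω : ∃ ω : V, B ω = 1 ∧ N ω = 1 ∧ u ω = 1) :
    sSup {r : ℝ | ∃ y : V, y ≠ 0 ∧ u y = 0 ∧ r = B y / N y} ≤
        sSup {r : ℝ | ∃ x : V, x ≠ 0 ∧ r = B x / N x} ∧
      sSup {r : ℝ | ∃ x : V, x ≠ 0 ∧ r = B x / N x} ≤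
        2 * sSup {r : ℝ | ∃ y : V, y ≠ 0 ∧ u y = 0 ∧ r = B y / N y} + 1 := by
  classical
  obtain ⟨ω, hBω, hNω, huω⟩ := hω
  set S : Set ℝ := {r : ℝ | ∃ y : V, y ≠ 0 ∧ u y = 0 ∧ r = B y / N y} with hS
  set T : Set ℝ := {r : ℝ | ∃ x : V, x ≠ 0 ∧ r = B x / N x} with hT
  have hNpos : ∀ x : V, x ≠ 0 → 0 < N x := by
    intro x hx
    rcases (apply_nonneg N x).lt_or_eq with h | h
    · exact h
    · exact absurd (hNdef x h.symm) hx
  -- boundedness above of T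
  obtain ⟨C, hC0, hC⟩ := seminorm_bound_of_fd B
  obtain ⟨c, hc0, hc⟩ := seminorm_lower_bound_of_fd N hNdef
  have hTbdd : ∀ r ∈ T, r ≤ C / c := by
    rintro r ⟨x, hx, rfl⟩
    have hNx := hNpos x hx
    rw [div_le_div_iff₀ hNx hc0]
    calc B x * c ≤ (C * ‖x‖) * c := mul_le_mul_of_nonneg_right (hC x) hc0.le
      _ = C * (c * ‖x‖) := by ring
      _ ≤ C * N x := mul_le_mul_of_nonneg_left (hc x) hC0
  have hST : S ⊆ T := by rintro r ⟨y, hy, -, rfl⟩; exact ⟨y, hy, rfl⟩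
  have hωne : ω ≠ 0 := by
    intro h; rw [h] at hNω; simp at hNω
  have hωT : (1 : ℝ) ∈ T := ⟨ω, hωne, by rw [hBω, hNω]; norm_num⟩
  have hTne : T.Nonempty := ⟨1, hωT⟩
  have hTbdd' : BddAbove T := ⟨C / c, hTbdd⟩
  have hSnonneg : 0 ≤ sSup S := by
    rcases Set.eq_empty_or_nonempty S with h | h
    · rw [h, Real.sSup_empty]
    · obtain ⟨r, hr⟩ := h
      have hr' := hr
      obtain ⟨y, hy, -, hreq⟩ := hr
      have h0r : 0 ≤ r := by
        rw [hreq]; exact div_nonneg (apply_nonneg B y) (apply_nonneg N y)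
      exact h0r.trans (le_csSup (hTbdd'.mono hST) hr')
  constructor
  · rcases Set.eq_empty_or_nonempty S with h | h
    · rw [h, Real.sSup_empty]
      exact le_trans (by norm_num) (le_csSup hTbdd' hωT)
    · exact csSup_le_csSup hTbdd' h hST
  · -- main inequality
    set R' := sSup S with hR'
    refine csSup_le hTne ?_
    rintro r ⟨x, hx, rfl⟩
    have hNx := hNpos x hx
    rw [div_le_iff₀ hNx]
    set y := x - u x • ω with hy
    have huy : u y = 0 := by simp [hy, huω]
    have hxy : x = y + u x • ω := by simp [hy]
    have hBy : B y ≤ R' * N y := by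
      rcases eq_or_ne y 0 with h0 | h0
      · simp [h0, mul_nonneg hSnonneg (apply_nonneg N _)]
      · have hmem : B y / N y ∈ S := ⟨y, h0, huy, rfl⟩
        have hle : B y / N y ≤ R' := le_csSup (hTbdd'.mono hST) hmem
        have hNy := hNpos y h0
        calc B y = (B y / N y) * N y := by field_simp
          _ ≤ R' * N y := mul_le_mul_of_nonneg_right hle hNy.le
    have hNy2 : N y ≤ 2 * N x := by
      calc N y ≤ N x + N (u x • ω) := by
            rw [hy]; exact map_sub_le_add N x (u x • ω)
        _ = N x + |u x| * N ω := by rw [map_smul_eq_mul]; simp [Real.norm_eq_abs]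
        _ ≤ N x + N x := by
            rw [hNω, mul_one]; exact add_le_add_right (hu x) _
        _ = 2 * N x := by ring
    calc B x = B (y + u x • ω) := by rw [← hxy]
      _ ≤ B y + B (u x • ω) := map_add_le_add B y (u x • ω)
      _ = B y + |u x| * B ω := by rw [map_smul_eq_mul]; simp [Real.norm_eq_abs]
      _ ≤ R' * N y + N x := by
          rw [hBω, mul_one]
          exact add_le_add hBy ((hu x).trans (le_refl _))
      _ ≤ R' * (2 * N x) + N x := by
          exact add_le_add_left (mul_le_mul_of_nonneg_left hNy2 hSnonneg) _
      _ = (2 * R' + 1) * N x := by ring
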